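/- For every \varepsilon > 0, \alpha \geq -\varepsilon, and \tau > -1, the function r \mapsto r^{\alpha} J_{\tau+\varepsilon}(r)/J_{\tau}(r) is increasing on (0, j_{\tau}), where J_{\tau} is the Bessel function of the first kind of order \tau and j_{\tau} is its first positive zero. -/

import Mathlib

/-- Lemma A.1: For every `ε > 0`, `α ≥ -ε`, `τ > -1`, the function
`r ↦ r^α J_{τ+ε}(r)/J_τ(r)` is increasing on `(0, j_τ)`. Here `J` is the Bessel function
of the first kind (axiomatized via its first positive zero `j`, its positivity before the
first zero, the recurrence `(r^{-τ}J_τ)' = -r^{-τ}J_{τ+1}`, and the strict decrease in the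
order `τ` of the quotient `J_{τ+1}/J_τ` on `(0, j_τ)`). -/
theorem stmt13 (J : ℝ → ℝ → ℝ) (j : ℝ → ℝ)
    (hjpos : ∀ τ : ℝ, -1 < τ → 0 < j τ)
    (hjmono : ∀ τ₁ τ₂ : ℝ, -1 < τ₁ → τ₁ ≤ τ₂ → j τ₁ ≤ j τ₂)
    (hJpos : ∀ τ : ℝ, -1 < τ → ∀ r ∈ Set.Ioo 0 (j τ), 0 < J τ r)
    (hJzero : ∀ τ : ℝ, -1 < τ → J τ (j τ) = 0)
    (hrec : ∀ τ : ℝ, -1 < τ → ∀ r : ℝ, 0 < r →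
      HasDerivAt (fun s : ℝ => s ^ (-τ) * J τ s) (-(r ^ (-τ) * J (τ + 1) r)) r)
    (hquot : ∀ τ₁ τ₂ : ℝ, -1 < τ₁ → τ₁ < τ₂ → ∀ r ∈ Set.Ioo 0 (j τ₁),
      J (τ₂ + 1) r / J τ₂ r < J (τ₁ + 1) r / J τ₁ r) :
    ∀ ε : ℝ, 0 < ε → ∀ α : ℝ, -ε ≤ α → ∀ τ : ℝ, -1 < τ →
      StrictMonoOn (fun r : ℝ => r ^ α * J (τ + ε) r / J τ r) (Set.Ioo 0 (j τ)) := by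
  intro ε hε α hα τ hτ
  have hτε : -1 < τ + ε := by linarith
  have hjle : j τ ≤ j (τ + ε) := hjmono τ (τ + ε) hτ (by linarith)
  set f : ℝ → ℝ := fun r : ℝ => r ^ α * J (τ + ε) r / J τ r with hf
  -- key: derivative exists and is positive at each point of the interval
  have key : ∀ r ∈ Set.Ioo 0 (j τ), ∃ D : ℝ, HasDerivAt f D r ∧ 0 < D := by
    intro r hr
    obtain ⟨hr0, hrj⟩ := hr
    have hJτ : 0 < J τ r := hJpos τ hτ r ⟨hr0, hrj⟩
    have hJτε : 0 < J (τ + ε) r := hJpos (τ + ε) hτε r ⟨hr0, lt_of_lt_of_le hrj hjle⟩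
    have hG : HasDerivAt (fun s : ℝ => s ^ (-(τ + ε)) * J (τ + ε) s)
        (-(r ^ (-(τ + ε)) * J (τ + ε + 1) r)) r := hrec (τ + ε) hτε r hr0
    have hH : HasDerivAt (fun s : ℝ => s ^ (-τ) * J τ s)
        (-(r ^ (-τ) * J (τ + 1) r)) r := hrec τ hτ r hr0
    have hHne : r ^ (-τ) * J τ r ≠ 0 :=
      ne_of_gt (mul_pos (Real.rpow_pos_of_pos hr0 _) hJτ)
    have hpow : HasDerivAt (fun s : ℝ => s ^ (α + ε)) ((α + ε) * r ^ (α + ε - 1)) r :=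
      Real.hasDerivAt_rpow_const (Or.inl (ne_of_gt hr0))
    have hnum := hpow.mul hG
    have hg := hnum.div hH hHne
    -- f agrees with g near r
    have heq : f =ᶠ[nhds r] (fun s : ℝ =>
        s ^ (α + ε) * (s ^ (-(τ + ε)) * J (τ + ε) s) / (s ^ (-τ) * J τ s)) := by
      filter_upwards [Ioi_mem_nhds hr0] with s hs
      have hs0 : (0:ℝ) < s := hs
      have h1 : s ^ (α + ε) * (s ^ (-(τ + ε)) * J (τ + ε) s)
          = s ^ (α - τ) * J (τ + ε) s := by
        rw [← mul_assoc, ← Real.rpow_add hs0]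
        ring_nf
      rw [hf]
      simp only
      rw [h1, mul_div_mul_comm, ← Real.rpow_sub hs0]
      ring_nf
    have hD := hg.congr_of_eventuallyEq heq
    refine ⟨_, hD, ?_⟩
    -- positivity of the derivative
    have hquot' := hquot τ (τ + ε) hτ (by linarith) r ⟨hr0, hrj⟩
    have hcross : J (τ + ε + 1) r * J τ r < J (τ + 1) r * J (τ + ε) r :=
      (div_lt_div_iff₀ hJτε hJτ).mp hquot'
    have hterm2 : 0 < -(r ^ (-(τ + ε)) * J (τ + ε + 1) r) * (r ^ (-τ) * J τ r)
        - r ^ (-(τ + ε)) * J (τ + ε) r * -(r ^ (-τ) * J (τ + 1) r) := by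
      have h := mul_pos (Real.rpow_pos_of_pos hr0 (-(τ + ε)))
        (mul_pos (Real.rpow_pos_of_pos hr0 (-τ)) (sub_pos.mpr hcross))
      nlinarith [h]
    have hterm1 : 0 ≤ (α + ε) * r ^ (α + ε - 1) * (r ^ (-(τ + ε)) * J (τ + ε) r)
        * (r ^ (-τ) * J τ r) := by
      have : 0 ≤ α + ε := by linarith
      positivity
    apply div_pos
    · simp only [Pi.mul_apply]
      nlinarith [mul_pos (Real.rpow_pos_of_pos hr0 (α + ε)) hterm2]
    · positivity
  have hcont : ContinuousOn f (Set.Ioo 0 (j τ)) := by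
    intro r hr
    obtain ⟨D, hD, _⟩ := key r hr
    exact hD.continuousAt.continuousWithinAt
  have := strictMonoOn_of_deriv_pos (convex_Ioo 0 (j τ)) hcont ?_
  · exact this
  · intro r hr
    rw [interior_Ioo] at hr
    obtain ⟨D, hD, hDpos⟩ := key r hr
    rwa [hD.deriv]
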